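/- With α, r_α, β, r_β as in the construction: if h is a substitution that is r_α-valid on α and h(α) = v 0u0 v for some u ∈ Σ* with |u|_{###} = 0, then h(α) ∈ L_E(β, r_β) if and only if there exist an index i ∈ {1,…,μ} and a substitution h' that is r_β-valid on β with h'(β̂ᵢ) = h(α). -/

import Mathlib

/-- The binary alphabet `{0, #}`: `false` represents `0`, `true` represents `#`. -/
abbrev Bin := Bool

/-- Patterns over `Σ ∪ X` with `Σ = Bin` and variable set `X = ℕ`. -/
abbrev Pattern := List (Bin ⊕ ℕ)

/-- Applying a substitution (determined by its action on variables, and fixing every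
terminal) to a pattern. -/
def applySub (s : ℕ → List Bin) : Pattern → List Bin
  | [] => []
  | c :: p => Sum.elim (fun a => [a]) s c ++ applySub s p

/-- The set of variables occurring in a pattern. -/
def varsOf (p : Pattern) : Set ℕ := {x | Sum.inr x ∈ p}

/-- A substitution is `r`-valid on `p` if every variable occurring in `p` is mapped into
its constraint language. -/
def Valid (r : ℕ → Set (List Bin)) (p : Pattern) (s : ℕ → List Bin) : Prop :=
  ∀ x ∈ varsOf p, s x ∈ r x

/-- The erasing constrained pattern language `L_E(p, r)`. -/
def LangE (p : Pattern) (r : ℕ → Set (List Bin)) : Set (List Bin) :=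
  {w | ∃ s, Valid r p s ∧ applySub s p = w}

/-- The word `v = 0###0`. -/
def vWord : List Bin := [false, true, true, true, false]

/-- `u` contains no occurrence of `###` as a factor, i.e. `|u|_{###} = 0`. -/
def NoTripleHash (u : List Bin) : Prop := ¬ ([true, true, true] <:+: u)

/-- The constraint language of the variable `α₁`:
`{0w0 : w ∈ Σ*, |w|_{###} = 0} ∪ {ε}`. -/
def Ra1 : Set (List Bin) :=
  {w | ∃ u, NoTripleHash u ∧ w = [false] ++ u ++ [false]} ∪ {[]}

/-- The constraint language of the variable `ỹ`:
`Σ* \ { v u v : u ∈ Ra1, u ≠ ε }`. -/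
def Ryt : Set (List Bin) :=
  {w | ¬ ∃ u ∈ Ra1, u ≠ [] ∧ w = vWord ++ u ++ vWord}

/-- All the data and assumptions of the construction: the patterns with regular
constraints `(α, r_α)` and `(β, r_β)` built from the predicates `γ₁, …, γ_μ`. -/
structure Construction where
  /-- the variable `x_v` of `α` -/
  xv : ℕ
  /-- the variable `α₁` of `α` -/
  a1 : ℕ
  /-- the variable `ỹ` of `α` -/
  yt : ℕ
  /-- the number of predicates -/
  μ : ℕ
  /-- the variables `x₁, …, x_μ` of `β` -/
  xs : Fin μ → ℕ
  /-- the terminal-free predicate patterns `γ₁, …, γ_μ` (words over variables) -/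
  γ : Fin μ → List ℕ
  /-- the variable `z̃` of `β` -/
  zt : ℕ
  /-- the constraint `r_α` -/
  rα : ℕ → Set (List Bin)
  /-- the constraint `r_β` -/
  rβ : ℕ → Set (List Bin)
  xv_ne_a1 : xv ≠ a1
  xv_ne_yt : xv ≠ yt
  a1_ne_yt : a1 ≠ yt
  hxv : rα xv = {[], vWord}
  ha1 : rα a1 = Ra1
  hyt : rα yt = Ryt
  xs_inj : Function.Injective xs
  xs_ne_zt : ∀ i, xs i ≠ zt
  xs_fresh : ∀ i, xs i ≠ xv ∧ xs i ≠ a1 ∧ xs i ≠ yt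
  zt_fresh : zt ≠ xv ∧ zt ≠ a1 ∧ zt ≠ yt
  γ_disj : ∀ i j, i ≠ j → ∀ x ∈ γ i, x ∉ γ j
  γ_fresh : ∀ i, ∀ x ∈ γ i,
    (∀ j, x ≠ xs j) ∧ x ≠ zt ∧ x ≠ xv ∧ x ≠ a1 ∧ x ≠ yt
  hrβxs : ∀ i, rβ (xs i) = {[], vWord}
  hrβzt : rβ zt = Ryt
  hrβγ_eps : ∀ i, ∀ x ∈ γ i, [] ∈ rβ x
  hγ_lang : ∀ i, ∀ w ∈ LangE ((γ i).map Sum.inr) rβ,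
    w = [] ∨ ∃ u, NoTripleHash u ∧ w = [false] ++ u ++ [false]

/-- The pattern `α = x_v α₁ x_v ỹ`. -/
def Construction.α (C : Construction) : Pattern :=
  [Sum.inr C.xv, Sum.inr C.a1, Sum.inr C.xv, Sum.inr C.yt]

/-- The pattern `β̂ᵢ = xᵢ γᵢ xᵢ`. -/
def Construction.βhat (C : Construction) (i : Fin C.μ) : Pattern :=
  Sum.inr (C.xs i) :: ((C.γ i).map Sum.inr ++ [Sum.inr (C.xs i)])

/-- The pattern `β = β̂₁ ⋯ β̂_μ z̃`. -/
def Construction.β (C : Construction) : Pattern :=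
  (List.ofFn C.βhat).flatten ++ [Sum.inr C.zt]

section Aux

lemma applySub_append (s : ℕ → List Bin) (p q : Pattern) :
    applySub s (p ++ q) = applySub s p ++ applySub s q := by
  induction p with
  | nil => rfl
  | cons c p ih => simp [applySub, ih]

lemma applySub_flatten (s : ℕ → List Bin) (L : List Pattern) :
    applySub s L.flatten = (L.map (applySub s)).flatten := by
  induction L with
  | nil => rfl
  | cons p L ih => simp [applySub_append, ih]

lemma applySub_congr {s s' : ℕ → List Bin} {p : Pattern}
    (h : ∀ x ∈ varsOf p, s x = s' x) : applySub s p = applySub s' p := by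
  induction p with
  | nil => rfl
  | cons c p ih =>
    have h' : ∀ x ∈ varsOf p, s x = s' x := fun x hx =>
      h x (by simpa [varsOf] using Or.inr (by simpa [varsOf] using hx))
    cases c with
    | inl a => simp [applySub, ih h']
    | inr x =>
      have := h x (by simp [varsOf])
      simp [applySub, ih h', this]

lemma applySub_eq_nil (s : ℕ → List Bin) (p : Pattern)
    (hp : ∀ c ∈ p, ∃ y, c = Sum.inr y ∧ s y = []) : applySub s p = [] := by
  induction p with
  | nil => rfl
  | cons c p ih =>
    obtain ⟨y, rfl, hy⟩ := hp c (List.mem_cons_self)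
    simp [applySub, hy, ih fun c hc => hp c (List.mem_cons_of_mem _ hc)]

lemma flatten_ofFn_single {X : Type*} {n : ℕ} (f : Fin n → List X) (i : Fin n)
    (h : ∀ j, j ≠ i → f j = []) : (List.ofFn f).flatten = f i := by
  induction n with
  | zero => exact i.elim0
  | succ n ih =>
    rw [List.ofFn_succ, List.flatten_cons]
    rcases Fin.eq_zero_or_eq_succ i with rfl | ⟨j, rfl⟩
    · have hrest : (List.ofFn fun k : Fin n => f k.succ).flatten = [] := by
        rw [List.flatten_eq_nil_iff]
        intro l hl
        rw [List.mem_ofFn] at hl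
        obtain ⟨k, rfl⟩ := hl
        exact h k.succ (Fin.succ_ne_zero k)
      simp [hrest]
    · have h0 : f 0 = [] := h 0 (by simp [Fin.ext_iff])
      rw [h0, List.nil_append]
      exact ih (fun k => f k.succ) j (fun k hk => h k.succ (by simpa using hk))

lemma scan_blocks {w z : List Bin} :
    ∀ L : List (List Bin), (∀ b ∈ L, b = [] ∨ (∀ t, b ++ t = w → t = [])) →
      L.flatten ++ z = w → (z = w ∨ ∃ b ∈ L, b = w) := by
  intro L
  induction L with
  | nil => intro _ h; left; simpa using h
  | cons b L ih =>
    intro hall heq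
    rcases hall b (List.mem_cons_self) with hb | hb
    · subst hb
      rcases ih (fun c hc => hall c (List.mem_cons_of_mem _ hc)) (by simpa using heq) with h | ⟨c, hc, rfl⟩
      · exact Or.inl h
      · exact Or.inr ⟨c, List.mem_cons_of_mem _ hc, rfl⟩
    · right
      rw [List.flatten_cons, List.append_assoc] at heq
      have ht := hb _ heq
      rw [ht, List.append_nil] at heq
      exact ⟨b, List.mem_cons_self, heq⟩

lemma infix_of_three {u : List Bin} {k : ℕ} (h0 : u[k]? = some true)
    (h1 : u[k+1]? = some true) (h2 : u[k+2]? = some true) :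
    [true, true, true] <:+: u := by
  obtain ⟨hk0, e0⟩ := List.getElem?_eq_some_iff.mp h0
  obtain ⟨hk1, e1⟩ := List.getElem?_eq_some_iff.mp h1
  obtain ⟨hk2, e2⟩ := List.getElem?_eq_some_iff.mp h2
  refine ⟨u.take k, u.drop (k+3), ?_⟩
  have d0 : u.drop k = true :: u.drop (k+1) := by
    rw [← List.getElem_cons_drop hk0, e0]
  have d1 : u.drop (k+1) = true :: u.drop (k+2) := by
    rw [← List.getElem_cons_drop hk1, e1]
  have d2 : u.drop (k+2) = true :: u.drop (k+3) := by
    rw [← List.getElem_cons_drop hk2, e2]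
  calc u.take k ++ [true,true,true] ++ u.drop (k+3)
      = u.take k ++ u.drop k := by rw [d0, d1, d2]; simp
    _ = u := List.take_append_drop k u

lemma hash_position {u A B : List Bin} (hu : NoTripleHash u)
    (h : A ++ ([true, true, true] ++ B) = vWord ++ ([false] ++ u ++ [false]) ++ vWord) :
    A.length = 1 ∨ A.length = 8 + u.length := by
  obtain ⟨n, hn⟩ : ∃ n, A.length = n := ⟨_, rfl⟩
  have hw : vWord ++ ([false] ++ u ++ [false]) ++ vWord
      = [false, true, true, true, false, false] ++ (u ++ [false, false, true, true, true, false]) := by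
    simp [vWord]
  rw [hw] at h
  set w : List Bin := [false, true, true, true, false, false] ++ (u ++ [false, false, true, true, true, false]) with hwdef
  have hlen : n + 3 + B.length = 12 + u.length := by
    have := congrArg List.length h
    simp [hn, hwdef] at this
    omega
  have hval : ∀ k, k ≤ 2 → w[n + k]? = some true := by
    intro k hk
    rw [← h, List.getElem?_append_right (by omega)]
    interval_cases k <;> simp [hn]
  have hwu : ∀ k, k < u.length → w[6 + k]? = u[k]? := by
    intro k hk
    rw [hwdef, List.getElem?_append_right (by simp only [List.length_cons, List.length_nil]; omega),
      show 6 + k - ([false,true,true,true,false,false] : List Bin).length = k by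
        simp only [List.length_cons, List.length_nil]; omega,
      List.getElem?_append_left hk]
  have hwt : ∀ j, w[6 + u.length + j]? = ([false, false, true, true, true, false] : List Bin)[j]? := by
    intro j
    rw [hwdef, List.getElem?_append_right (by simp only [List.length_cons, List.length_nil]; omega),
      show 6 + u.length + j - ([false,true,true,true,false,false] : List Bin).length = u.length + j by
        simp only [List.length_cons, List.length_nil]; omega,
      List.getElem?_append_right (by omega),
      show u.length + j - u.length = j by omega]
  rcases Nat.lt_or_ge n 6 with h6 | h6
  · interval_cases n
    · have := hval 0 (by omega); simp [hwdef] at this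
    · left; exact hn
    · have := hval 2 (by omega); simp [hwdef] at this
    · have := hval 1 (by omega); simp [hwdef] at this
    · have := hval 0 (by omega); simp [hwdef] at this
    · have := hval 0 (by omega); simp [hwdef] at this
  · rcases Nat.lt_or_ge (n + 2) (6 + u.length) with hmid | hhi
    · exfalso
      apply hu
      have e0 : u[n - 6]? = some true := by
        rw [← hwu (n - 6) (by omega), show 6 + (n - 6) = n + 0 by omega]; exact hval 0 (by omega)
      have e1 : u[n - 6 + 1]? = some true := by
        rw [← hwu (n - 6 + 1) (by omega), show 6 + (n - 6 + 1) = n + 1 by omega]; exact hval 1 (by omega)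
      have e2 : u[n - 6 + 2]? = some true := by
        rw [← hwu (n - 6 + 2) (by omega), show 6 + (n - 6 + 2) = n + 2 by omega]; exact hval 2 (by omega)
      exact infix_of_three e0 e1 e2
    · rcases Nat.lt_or_ge n (8 + u.length) with hlow | hge
      · exfalso
        rcases Nat.lt_or_ge n (6 + u.length) with hn6 | hn6
        · obtain ⟨k, hk2, hke⟩ : ∃ k ≤ 2, n + k = 6 + u.length + 0 :=
            ⟨6 + u.length - n, by omega, by omega⟩
          have := hval k hk2
          rw [hke, hwt 0] at this
          simp at this
        · obtain ⟨j, hj1, hje⟩ : ∃ j ≤ 1, n + 0 = 6 + u.length + j :=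
            ⟨n - (6 + u.length), by omega, by omega⟩
          have := hval 0 (by omega)
          rw [hje, hwt j] at this
          interval_cases j <;> simp at this
      · rcases Nat.eq_or_lt_of_le hge with heq | hgt
        · right; omega
        · exfalso
          have := hval 2 (by omega)
          rw [show n + 2 = 6 + u.length + 5 by omega, hwt 5] at this
          simp at this

lemma prefix_contra {u' t rest : List Bin} (hu' : NoTripleHash u')
    (h : ([false] ++ u' ++ [false]) ++ t = false :: true :: true :: true :: rest) : False := by
  rcases u' with _ | ⟨a, u'⟩
  · simp at h
  rcases u' with _ | ⟨b, u'⟩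
  · simp at h
  rcases u' with _ | ⟨c, u'⟩
  · simp at h
  · simp at h
    exact hu' ⟨[], u', by simp [h.1, h.2.1, h.2.2.1]⟩

end Aux
section ConsAux

variable {C : Construction}

lemma mem_varsOf_betahat {i : Fin C.μ} {x : ℕ} :
    x ∈ varsOf (C.βhat i) ↔ x = C.xs i ∨ x ∈ C.γ i := by
  simp [Construction.βhat, varsOf]
  tauto

lemma mem_varsOf_beta {x : ℕ} :
    x ∈ varsOf C.β ↔ (∃ i, x = C.xs i ∨ x ∈ C.γ i) ∨ x = C.zt := by
  simp only [Construction.β, varsOf, Set.mem_setOf_eq, List.mem_append, List.mem_flatten,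
    List.mem_ofFn, Set.mem_range, List.mem_singleton, Sum.inr.injEq]
  constructor
  · rintro (⟨l, ⟨i, rfl⟩, hl⟩ | h)
    · exact Or.inl ⟨i, mem_varsOf_betahat.mp hl⟩
    · exact Or.inr h
  · rintro (⟨i, hi⟩ | h)
    · exact Or.inl ⟨C.βhat i, ⟨i, rfl⟩, mem_varsOf_betahat.mpr hi⟩
    · exact Or.inr h

lemma applySub_beta (s : ℕ → List Bin) :
    applySub s C.β = (List.ofFn fun j => applySub s (C.βhat j)).flatten ++ s C.zt := by
  rw [Construction.β, applySub_append, applySub_flatten, List.map_ofFn]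
  simp only [applySub, Sum.elim_inr, List.append_nil, Function.comp_def]

lemma applySub_betahat (s : ℕ → List Bin) (i : Fin C.μ) :
    applySub s (C.βhat i)
      = s (C.xs i) ++ (applySub s ((C.γ i).map Sum.inr) ++ s (C.xs i)) := by
  simp [Construction.βhat, applySub, applySub_append]

end ConsAux
/-- If `h` is `r_α`-valid on `α` and `h(α) = v 0u0 v` with `|u|_{###} = 0`, then
`h(α) ∈ L_E(β, r_β)` iff some `β̂ᵢ` produces `h(α)` under an `r_β`-valid substitution. -/
theorem special_words_in_beta_iff_some_predicate (C : Construction)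
    (h : ℕ → List Bin) (hvalid : Valid C.rα C.α h)
    (u : List Bin) (hu : NoTripleHash u)
    (hform : applySub h C.α = vWord ++ ([false] ++ u ++ [false]) ++ vWord) :
    applySub h C.α ∈ LangE C.β C.rβ ↔
      ∃ i : Fin C.μ, ∃ h' : ℕ → List Bin,
        Valid C.rβ C.β h' ∧ applySub h' (C.βhat i) = applySub h C.α := by
  rw [hform]
  constructor
  · rintro ⟨s, hs, heqβ⟩
    rw [applySub_beta] at heqβ
    have hblocks : ∀ b ∈ List.ofFn fun j => applySub s (C.βhat j),
        b = [] ∨ (∀ t, b ++ t = vWord ++ ([false] ++ u ++ [false]) ++ vWord → t = []) := by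
      intro b hb
      rw [List.mem_ofFn] at hb
      obtain ⟨i, rfl⟩ := hb
      -- the value of the i-th repeated variable
      have hximem : C.xs i ∈ varsOf C.β := mem_varsOf_beta.mpr (Or.inl ⟨i, Or.inl rfl⟩)
      have hxval : s (C.xs i) = [] ∨ s (C.xs i) = vWord := by
        have := hs _ hximem
        rw [C.hrβxs] at this
        simpa [Set.mem_insert_iff] using this
      -- the value of the predicate pattern
      have hgval : applySub s ((C.γ i).map Sum.inr) = [] ∨
          ∃ u', NoTripleHash u' ∧
            applySub s ((C.γ i).map Sum.inr) = [false] ++ u' ++ [false] := by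
        refine C.hγ_lang i _ ⟨s, ?_, rfl⟩
        intro x hx
        refine hs x (mem_varsOf_beta.mpr (Or.inl ⟨i, Or.inr ?_⟩))
        simpa [varsOf] using hx
      rcases hxval with hxe | hxv
      · rcases hgval with hge | ⟨u', hu', hgu⟩
        · left
          rw [applySub_betahat, hxe, hge]
          rfl
        · right
          intro t ht
          exfalso
          rw [applySub_betahat, hxe, hgu] at ht
          simp only [List.append_nil, List.nil_append] at ht
          refine prefix_contra (t := t) (rest := [false, false] ++ u ++ ([false] ++ vWord)) hu' ?_
          simpa [vWord] using ht
      · right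
        intro t ht
        rw [applySub_betahat, hxv] at ht
        set g := applySub s ((C.γ i).map Sum.inr) with hg
        have hA : (vWord ++ g ++ [false]) ++ ([true, true, true] ++ ([false] ++ t))
            = vWord ++ ([false] ++ u ++ [false]) ++ vWord := by
          rw [← ht]
          simp [vWord]
        rcases hash_position hu hA with h1 | h8
        · exfalso
          simp [vWord] at h1
        · have hglen : g.length = 2 + u.length := by
            simp [vWord] at h8
            omega
          have := congrArg List.length ht
          simp [vWord, hglen] at this
          rw [← List.length_eq_zero_iff]
          omega
    rcases scan_blocks _ hblocks heqβ with hz | ⟨b, hb, hbW⟩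
    · exfalso
      have hztmem : C.zt ∈ varsOf C.β := mem_varsOf_beta.mpr (Or.inr rfl)
      have := hs _ hztmem
      rw [C.hrβzt] at this
      exact this ⟨[false] ++ u ++ [false], Set.mem_union_left _ ⟨u, hu, rfl⟩, by simp, hz⟩
    · rw [List.mem_ofFn] at hb
      obtain ⟨i, hi⟩ := hb
      exact ⟨i, s, hs, by rw [show applySub s (C.βhat i) = b from hi, hbW]⟩
  · rintro ⟨i, h', hval', heq'⟩
    classical
    set s : ℕ → List Bin := fun x => if x = C.xs i ∨ x ∈ C.γ i then h' x else [] with hsdef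
    have hs_on : ∀ x ∈ varsOf (C.βhat i), s x = h' x := by
      intro x hx
      rw [mem_varsOf_betahat] at hx
      simp only [hsdef, if_pos hx]
    have hs_off : ∀ x, ¬(x = C.xs i ∨ x ∈ C.γ i) → s x = [] := by
      intro x hx
      simp only [hsdef, if_neg hx]
    -- other blocks vanish
    have hzero : ∀ j, j ≠ i → applySub s (C.βhat j) = [] := by
      intro j hj
      apply applySub_eq_nil
      intro c hc
      have hc' : ∃ y, c = Sum.inr y ∧ y ∈ varsOf (C.βhat j) := by
        rcases c with a | y
        · exfalso
          simp [Construction.βhat] at hc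
        · exact ⟨y, rfl, hc⟩
      obtain ⟨y, rfl, hy⟩ := hc'
      refine ⟨y, rfl, hs_off y ?_⟩
      rw [mem_varsOf_betahat] at hy
      rintro (rfl | hyγ)
      · rcases hy with hy | hy
        · exact hj (C.xs_inj hy.symm ▸ by exact (Fin.ext_iff.mpr (by
            have := C.xs_inj hy.symm; omega)))
        · exact ((C.γ_fresh j _ hy).1 i) rfl
      · rcases hy with rfl | hy
        · exact ((C.γ_fresh i _ hyγ).1 j) rfl
        · exact C.γ_disj i j (fun hij => hj (hij ▸ rfl)) _ hyγ hy
    have hszt : s C.zt = [] := by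
      refine hs_off _ ?_
      rintro (h1 | h2)
      · exact C.xs_ne_zt i h1.symm
      · exact (C.γ_fresh i _ h2).2.1 rfl
    refine ⟨s, ?_, ?_⟩
    · -- validity
      intro x hx
      by_cases hc : x = C.xs i ∨ x ∈ C.γ i
      · rw [show s x = h' x by simp only [hsdef, if_pos hc]]
        exact hval' x hx
      · rw [hs_off x hc]
        rcases mem_varsOf_beta.mp hx with ⟨j, rfl | hj⟩ | rfl
        · rw [C.hrβxs]
          exact Set.mem_insert _ _
        · exact C.hrβγ_eps j _ hj
        · rw [C.hrβzt]
          rintro ⟨u', -, -, habs⟩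
          simp [vWord] at habs
    · rw [applySub_beta, hszt, List.append_nil,
        flatten_ofFn_single _ i (fun j hj => hzero j hj),
        applySub_congr hs_on, heq']
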